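/- For every σ-invariant polynomial p ∈ ℂ[x₀,x₁,x₂] and all a, z, z' ∈ ℂ, the evaluations of p at the points (0, a, z) and (0, −a, z') of ℂ³ are equal. In particular the invariants fail to separate the disjoint closed orbits {x₀ = 0, x₁ = a} and {x₀ = 0, x₁ = −a} for a ≠ 0, and fail to separate the distinct fixed points (0,0,z) and (0,0,z'). -/

import Mathlib

open MvPolynomial

noncomputable def sigma (t : ℂ) :
    MvPolynomial (Fin 3) ℂ →ₐ[ℂ] MvPolynomial (Fin 3) ℂ :=
  aeval ![X 0, X 1 + C t * X 0, X 2 + C (2 * t) * X 1 + C (t ^ 2) * X 0]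

lemma sigma_key (p : MvPolynomial (Fin 3) ℂ) (hp : ∀ t : ℂ, sigma t p = p) (t : ℂ)
    (v : Fin 3 → ℂ) :
    eval v p = eval ![v 0, v 1 + t * v 0, v 2 + 2 * t * v 1 + t ^ 2 * v 0] p := by
  conv_lhs => rw [← hp t]
  rw [sigma, ← coe_aeval_eq_eval, ← AlgHom.coe_toRingHom, ← RingHom.comp_apply,
    ← AlgHom.comp_toRingHom, comp_aeval]
  rw [← coe_aeval_eq_eval]
  change _ = (aeval _ : MvPolynomial (Fin 3) ℂ →ₐ[ℂ] ℂ) p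
  congr 2
  rw [AlgHom.toRingHom_eq_coe]
  congr 2
  funext i
  fin_cases i <;> simp

lemma cont_aux (p : MvPolynomial (Fin 3) ℂ) (u v : ℂ → ℂ) (w : ℂ → ℂ) (hu : Continuous u)
    (hv : Continuous v) (hw : Continuous w) :
    Continuous fun s => eval ![u s, v s, w s] p := by
  refine (MvPolynomial.continuous_eval p).comp ?_
  refine continuous_pi fun i => ?_
  fin_cases i <;> simpa

theorem invariants_do_not_separate (p : MvPolynomial (Fin 3) ℂ)
    (hp : ∀ t : ℂ, sigma t p = p) (a z z' : ℂ) :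
    eval ![(0 : ℂ), a, z] p = eval ![(0 : ℂ), -a, z'] p := by
  have step1 : eval ![(0 : ℂ), a, z] p = eval ![(0 : ℂ), -a, z] p := by
    have h1 : ∀ ε : ℂ, ε ≠ 0 → eval ![ε, a, z] p = eval ![ε, -a, z] p := by
      intro ε hε
      have h := sigma_key p hp (-2 * a / ε) ![ε, a, z]
      rw [h]
      have hv : (![![ε, a, z] 0, ![ε, a, z] 1 + -2 * a / ε * ![ε, a, z] 0,
          ![ε, a, z] 2 + 2 * (-2 * a / ε) * ![ε, a, z] 1 + (-2 * a / ε) ^ 2 * ![ε, a, z] 0])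
          = ![ε, -a, z] := by
        funext i
        fin_cases i <;> simp <;> field_simp <;> ring
      rw [hv]
    have hc1 : Continuous fun ε : ℂ => eval ![ε, a, z] p :=
      cont_aux p _ _ _ continuous_id continuous_const continuous_const
    have hc2 : Continuous fun ε : ℂ => eval ![ε, -a, z] p :=
      cont_aux p _ _ _ continuous_id continuous_const continuous_const
    have := hc1.ext_on (dense_compl_singleton (0 : ℂ)) hc2 (fun x hx => h1 x hx)
    exact congrFun this 0
  have step2 : eval ![(0 : ℂ), -a, z] p = eval ![(0 : ℂ), -a, z'] p := by
    have h3 : ∀ b : ℂ, b ≠ 0 → eval ![(0 : ℂ), b, z] p = eval ![(0 : ℂ), b, z'] p := by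
      intro b hb
      have h := sigma_key p hp ((z' - z) / (2 * b)) ![0, b, z]
      rw [h]
      have hv : (![![0, b, z] 0, ![0, b, z] 1 + (z' - z) / (2 * b) * ![0, b, z] 0,
          ![0, b, z] 2 + 2 * ((z' - z) / (2 * b)) * ![0, b, z] 1
            + ((z' - z) / (2 * b)) ^ 2 * ![0, b, z] 0]) = ![(0 : ℂ), b, z'] := by
        funext i
        fin_cases i <;> simp <;> field_simp <;> ring
      rw [hv]
    have hc1 : Continuous fun b : ℂ => eval ![(0 : ℂ), b, z] p :=
      cont_aux p _ _ _ continuous_const continuous_id continuous_const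
    have hc2 : Continuous fun b : ℂ => eval ![(0 : ℂ), b, z'] p :=
      cont_aux p _ _ _ continuous_const continuous_id continuous_const
    have := hc1.ext_on (dense_compl_singleton (0 : ℂ)) hc2 (fun x hx => h3 x hx)
    exact congrFun this (-a)
  exact step1.trans step2
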